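/- Let I ⊆ ℝ be an open interval and let F, C : ℝ → ℝ be twice continuously differentiable on I with C(z) > 0 for all z ∈ I. Suppose that for all z ∈ I, (d²/dz²)(C(z)^{−1/2}) = (1/4)C(z)^{−1/2} and C(z)^{1/2}·(d/dz)(F(z)·(d/dz)C(z)^{−1/2}) = (1/2)F''(z) − (3/4)F(z) + 1. Then there exist constants C₁, C₂, C₃, C₄, C₅, C₆ ∈ ℝ with C₁C₅ − C₂C₆ = 0 and C₃C₅ − C₄C₆ = 0 such that for all z ∈ I, F(z) = 1 + (1/2)C₁e^{−2z} + C₂e^{−z} + C₃e^{z} + (1/2)C₄e^{2z} and C(z) = e^{−z}/(C₅ + C₆e^{−z})². -/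

import Mathlib

open Real

private lemma hasDerivAt_exp_mul (a z : ℝ) :
    HasDerivAt (fun w => Real.exp (a * w)) (a * Real.exp (a * z)) z := by
  simpa [mul_comm] using ((hasDerivAt_id' (𝕜 := ℝ)) z).const_mul a |>.exp

private lemma const_of_hasDerivAt_zero {I : Set ℝ} (hconv : Convex ℝ I) {f : ℝ → ℝ}
    (hf : ∀ z ∈ I, HasDerivAt f 0 z) {x y : ℝ} (hx : x ∈ I) (hy : y ∈ I) : f x = f y := by
  have h := hconv.norm_image_sub_le_of_norm_hasDerivWithin_le
    (f' := fun _ => (0:ℝ)) (C := 0)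
    (fun z hz => (hf z hz).hasDerivWithinAt) (fun z _ => by simp) hx hy
  have h2 : ‖f y - f x‖ ≤ 0 := by simpa using h
  have := norm_le_zero_iff.mp h2
  linarith [sub_eq_zero.mp this]


set_option maxHeartbeats 3200000 in
/-- the Einstein system for `(F, C)`:
`(C^{−1/2})'' = (1/4)C^{−1/2}` and `C^{1/2}·(F·(C^{−1/2})')' = (1/2)F'' − (3/4)F + 1`
on an open interval with `C > 0` forces the general Einstein solution
`F = 1 + (1/2)C₁e^{−2z} + C₂e^{−z} + C₃eᶻ + (1/2)C₄e^{2z}`,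
`C = e^{−z}/(C₅ + C₆e^{−z})²` with `C₁C₅ − C₂C₆ = 0` and `C₃C₅ − C₄C₆ = 0`. -/
theorem einstein_system_solution (I : Set ℝ) (hIopen : IsOpen I)
    (hIconn : IsPreconnected I) (F C : ℝ → ℝ)
    (hF : ContDiffOn ℝ 2 F I) (hC : ContDiffOn ℝ 2 C I)
    (hCpos : ∀ z ∈ I, 0 < C z)
    (h1 : ∀ z ∈ I, deriv (deriv (fun w => (Real.sqrt (C w))⁻¹)) z
        = (1/4) * (Real.sqrt (C z))⁻¹)
    (h2 : ∀ z ∈ I, Real.sqrt (C z) *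
        deriv (fun w => F w * deriv (fun u => (Real.sqrt (C u))⁻¹) w) z
        = (1/2) * deriv (deriv F) z - (3/4) * F z + 1) :
    ∃ C₁ C₂ C₃ C₄ C₅ C₆ : ℝ,
      C₁ * C₅ - C₂ * C₆ = 0 ∧ C₃ * C₅ - C₄ * C₆ = 0 ∧
      ∀ z ∈ I,
        F z = 1 + (1/2) * C₁ * exp (-2*z) + C₂ * exp (-z)
          + C₃ * exp z + (1/2) * C₄ * exp (2*z) ∧
        C z = exp (-z) / (C₅ + C₆ * exp (-z))^2 := by
  rcases I.eq_empty_or_nonempty with hIe | ⟨z₀, hz₀⟩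
  · exact ⟨0,0,0,0,0,0, by ring, by ring, fun z hz => by simp [hIe] at hz⟩
  have hconv : Convex ℝ I := hIconn.ordConnected.convex
  set g : ℝ → ℝ := fun w => (Real.sqrt (C w))⁻¹ with hg_def
  have hgz : ∀ z, g z = (Real.sqrt (C z))⁻¹ := fun _ => rfl
  have hsq : ∀ z ∈ I, Real.sqrt (C z) ≠ 0 := fun z hz => (Real.sqrt_pos.mpr (hCpos z hz)).ne'
  have hgpos : ∀ z ∈ I, 0 < g z := fun z hz =>
    inv_pos.mpr (Real.sqrt_pos.mpr (hCpos z hz))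
  have hg2 : ContDiffOn ℝ 2 g I := fun z hz =>
    ((Real.contDiffAt_sqrt (hCpos z hz).ne').comp_contDiffWithinAt z (hC z hz)).inv (hsq z hz)
  set g1 : ℝ → ℝ := deriv g with hg1_def
  have hg1c : ContDiffOn ℝ 1 g1 I := hg2.deriv_of_isOpen hIopen (by norm_num)
  have hgd : ∀ z ∈ I, HasDerivAt g (g1 z) z := fun z hz =>
    ((hg2.differentiableOn (by norm_num)).differentiableAt (hIopen.mem_nhds hz)).hasDerivAt
  have hg1d : ∀ z ∈ I, HasDerivAt g1 ((1/4) * g z) z := fun z hz => by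
    have hd := ((hg1c.differentiableOn one_ne_zero).differentiableAt
      (hIopen.mem_nhds hz)).hasDerivAt
    rwa [h1 z hz, ← hgz] at hd
  -- first integrals for g
  set Afun : ℝ → ℝ := fun w => (g1 w + g w / 2) * Real.exp (-(1/2) * w) with hA_def
  set Bfun : ℝ → ℝ := fun w => (g1 w - g w / 2) * Real.exp (1/2 * w) with hB_def
  have hAd : ∀ z ∈ I, HasDerivAt Afun 0 z := fun z hz => by
    have hd := ((hg1d z hz).add ((hgd z hz).div_const 2)).mul (hasDerivAt_exp_mul (-(1/2)) z)
    exact hd.congr_deriv (by simp only [Pi.add_apply, Pi.sub_apply]; ring)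
  have hBd : ∀ z ∈ I, HasDerivAt Bfun 0 z := fun z hz => by
    have hd := ((hg1d z hz).sub ((hgd z hz).div_const 2)).mul (hasDerivAt_exp_mul (1/2) z)
    exact hd.congr_deriv (by simp only [Pi.add_apply, Pi.sub_apply]; ring)
  obtain ⟨C₅, hC5_def⟩ : ∃ c : ℝ, c = Afun z₀ := ⟨_, rfl⟩
  obtain ⟨C₆, hC6_def⟩ : ∃ c : ℝ, c = -(Bfun z₀) := ⟨_, rfl⟩
  have hgeq : ∀ z ∈ I, g z = C₅ * Real.exp (1/2 * z) + C₆ * Real.exp (-(1/2) * z) := by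
    intro z hz
    have hA : Afun z = C₅ := (const_of_hasDerivAt_zero hconv hAd hz hz₀).trans hC5_def.symm
    have hB : Bfun z = -C₆ := by
      have := const_of_hasDerivAt_zero hconv hBd hz hz₀
      rw [this, hC6_def]; ring
    have hprod : Real.exp (-(1/2) * z) * Real.exp (1/2 * z) = 1 := by
      rw [← Real.exp_add]; norm_num
    simp only [hA_def] at hA
    simp only [hB_def] at hB
    linear_combination Real.exp (1/2 * z) * hA - Real.exp (-(1/2) * z) * hB
      - (g1 z + g z / 2) * hprod + (g1 z - g z / 2) * hprod
  have hg1eq : ∀ z ∈ I, g1 z = (C₅ * Real.exp (1/2 * z) - C₆ * Real.exp (-(1/2) * z)) / 2 := by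
    intro z hz
    have hA : Afun z = C₅ := (const_of_hasDerivAt_zero hconv hAd hz hz₀).trans hC5_def.symm
    have hB : Bfun z = -C₆ := by
      have := const_of_hasDerivAt_zero hconv hBd hz hz₀
      rw [this, hC6_def]; ring
    have hprod : Real.exp (-(1/2) * z) * Real.exp (1/2 * z) = 1 := by
      rw [← Real.exp_add]; norm_num
    simp only [hA_def] at hA
    simp only [hB_def] at hB
    linear_combination (Real.exp (1/2 * z) * hA + Real.exp (-(1/2) * z) * hB) / 2
      - g1 z * hprod
  -- the formula for C
  have hCform : ∀ z ∈ I, C z = Real.exp (-z) / (C₅ + C₆ * Real.exp (-z))^2 := by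
    intro z hz
    have hginv : (g z)⁻¹ = Real.sqrt (C z) := by rw [hgz, inv_inv]
    have hCz : C z = ((g z)⁻¹)^2 := by rw [hginv, Real.sq_sqrt (hCpos z hz).le]
    have hXpos : 0 < C₅ * Real.exp (1/2 * z) + C₆ * Real.exp (-(1/2) * z) := by
      rw [← hgeq z hz]; exact hgpos z hz
    have hmz : Real.exp (-z) = Real.exp (-(1/2) * z) * Real.exp (-(1/2) * z) := by
      rw [← Real.exp_add]; congr 1; ring
    have hprod : Real.exp (-(1/2) * z) * Real.exp (1/2 * z) = 1 := by
      rw [← Real.exp_add]; norm_num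
    have hfac : C₅ + C₆ * Real.exp (-z)
        = Real.exp (-(1/2) * z) * (C₅ * Real.exp (1/2 * z) + C₆ * Real.exp (-(1/2) * z)) := by
      rw [hmz]; linear_combination (-C₅) * hprod
    have hne : C₅ * Real.exp (1/2 * z) + C₆ * Real.exp (-(1/2) * z) ≠ 0 := hXpos.ne'
    have hene : Real.exp (-(1/2) * z) ≠ 0 := (Real.exp_pos _).ne'
    have key : ∀ X E : ℝ, X ≠ 0 → (X⁻¹)^2 * (E^2 * X^2) = E * E := by
      intro X E hX
      field_simp
    rw [hCz, hgeq z hz, hfac, hmz, mul_pow,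
      eq_div_iff (mul_ne_zero (pow_ne_zero 2 hene) (pow_ne_zero 2 hne))]
    exact key _ _ hne
  -- derivatives of F
  set f1 : ℝ → ℝ := deriv F with hf1_def
  have hf1c : ContDiffOn ℝ 1 f1 I := hF.deriv_of_isOpen hIopen (by norm_num)
  have hFd : ∀ z ∈ I, HasDerivAt F (f1 z) z := fun z hz =>
    ((hF.differentiableOn (by norm_num)).differentiableAt (hIopen.mem_nhds hz)).hasDerivAt
  have hf1d : ∀ z ∈ I, HasDerivAt f1 (deriv f1 z) z := fun z hz =>
    ((hf1c.differentiableOn one_ne_zero).differentiableAt (hIopen.mem_nhds hz)).hasDerivAt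
  -- the ODE for F
  have keyF : ∀ z ∈ I, g z * deriv f1 z - 2 * g1 z * f1 z = 2 * g z * (F z - 1) := by
    intro z hz
    have hd : deriv (fun w => F w * g1 w) z = f1 z * g1 z + F z * (1/4 * g z) :=
      ((hFd z hz).mul (hg1d z hz)).deriv
    have hODE := h2 z hz
    have hsqg : Real.sqrt (C z) = (g z)⁻¹ := by rw [hgz, inv_inv]
    rw [hd, hsqg] at hODE
    have hginv : g z * (g z)⁻¹ = 1 := mul_inv_cancel₀ (hgpos z hz).ne'
    linear_combination (-2 * g z) * hODE + 2 * (f1 z * g1 z + F z * (1/4 * g z)) * hginv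
  -- exponential identities
  have hexp : ∀ z : ℝ, Real.exp (1*z) = Real.exp (1/2 * z)^2
      ∧ Real.exp (2*z) = Real.exp (1/2 * z)^4
      ∧ Real.exp (-1*z) = (Real.exp (1/2 * z)^2)⁻¹
      ∧ Real.exp (-2*z) = (Real.exp (1/2 * z)^4)⁻¹
      ∧ Real.exp (-(1/2) * z) = (Real.exp (1/2 * z))⁻¹ := by
    intro z
    have h4 : Real.exp (1/2 * z)^4 = Real.exp (4*(1/2 * z)) := by
      rw [show (4:ℝ)*(1/2 * z) = 1/2 * z + (1/2 * z + (1/2 * z + 1/2 * z)) by ring,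
        Real.exp_add, Real.exp_add, Real.exp_add]; ring
    have h2' : Real.exp (1/2 * z)^2 = Real.exp (2*(1/2 * z)) := by
      rw [show (2:ℝ)*(1/2 * z) = 1/2 * z + 1/2 * z by ring, Real.exp_add]; ring
    refine ⟨?_, ?_, ?_, ?_, ?_⟩
    · rw [h2']; congr 1; ring
    · rw [h4]; congr 1; ring
    · rw [h2', ← Real.exp_neg]; congr 1; ring
    · rw [h4, ← Real.exp_neg]; congr 1; ring
    · rw [← Real.exp_neg]; congr 1; ring
  -- the explicit homogeneous solutions satisfy the ODE
  have id2 : ∀ z ∈ I, g z * (C₆ * Real.exp (1*z) + 2 * C₅ * Real.exp (2*z))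
      - 2 * g1 z * (C₆ * Real.exp (1*z) + C₅ * Real.exp (2*z))
      - 2 * g z * (C₆ * Real.exp (1*z) + 1/2 * C₅ * Real.exp (2*z)) = 0 := by
    intro z hz
    obtain ⟨e1, e2, em1, em2, emh⟩ := hexp z
    rw [hgeq z hz, hg1eq z hz, e1, e2, emh]
    have hu : Real.exp (1/2 * z) ≠ 0 := (Real.exp_pos _).ne'
    field_simp
    ring
  have id1 : ∀ z ∈ I, g z * (2 * C₆ * Real.exp (-2*z) + C₅ * Real.exp (-1*z))
      - 2 * g1 z * (-(C₆ * Real.exp (-2*z)) - C₅ * Real.exp (-1*z))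
      - 2 * g z * (1/2 * C₆ * Real.exp (-2*z) + C₅ * Real.exp (-1*z)) = 0 := by
    intro z hz
    obtain ⟨e1, e2, em1, em2, emh⟩ := hexp z
    rw [hgeq z hz, hg1eq z hz, em1, em2, emh]
    have hu : Real.exp (1/2 * z) ≠ 0 := (Real.exp_pos _).ne'
    field_simp
    ring
  have idW : ∀ z ∈ I, (1/2 * C₆ * Real.exp (-2*z) + C₅ * Real.exp (-1*z))
        * (C₆ * Real.exp (1*z) + C₅ * Real.exp (2*z))
      - (-(C₆ * Real.exp (-2*z)) - C₅ * Real.exp (-1*z))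
        * (C₆ * Real.exp (1*z) + 1/2 * C₅ * Real.exp (2*z)) = 3/2 * (g z)^2 := by
    intro z hz
    obtain ⟨e1, e2, em1, em2, emh⟩ := hexp z
    rw [hgeq z hz, e1, e2, em1, em2, emh]
    have hu : Real.exp (1/2 * z) ≠ 0 := (Real.exp_pos _).ne'
    field_simp
    ring
  -- Wronskian-quotient first integrals for F
  set P : ℝ → ℝ := fun w => (F w - 1) * (C₆ * Real.exp (1*w) + C₅ * Real.exp (2*w))
      - f1 w * (C₆ * Real.exp (1*w) + 1/2 * C₅ * Real.exp (2*w)) with hP_def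
  set Q : ℝ → ℝ := fun w => f1 w * (1/2 * C₆ * Real.exp (-2*w) + C₅ * Real.exp (-1*w))
      - (F w - 1) * (-(C₆ * Real.exp (-2*w)) - C₅ * Real.exp (-1*w)) with hQ_def
  set aa : ℝ → ℝ := fun w => P w / (g w)^2 with haa_def
  set bb : ℝ → ℝ := fun w => Q w / (g w)^2 with hbb_def
  have haad : ∀ z ∈ I, HasDerivAt aa 0 z := by
    intro z hz
    have hgz0 : g z ≠ 0 := (hgpos z hz).ne'
    have hd2 : HasDerivAt (fun w => C₆ * Real.exp (1*w) + C₅ * Real.exp (2*w))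
        (C₆ * (1 * Real.exp (1*z)) + C₅ * (2 * Real.exp (2*z))) z :=
      ((hasDerivAt_exp_mul 1 z).const_mul C₆).add ((hasDerivAt_exp_mul 2 z).const_mul C₅)
    have hd2' : HasDerivAt (fun w => C₆ * Real.exp (1*w) + 1/2 * C₅ * Real.exp (2*w))
        (C₆ * (1 * Real.exp (1*z)) + 1/2 * C₅ * (2 * Real.exp (2*z))) z :=
      ((hasDerivAt_exp_mul 1 z).const_mul C₆).add
        ((hasDerivAt_exp_mul 2 z).const_mul (1/2 * C₅))
    have hPd : HasDerivAt P
        ((f1 z * (C₆ * Real.exp (1*z) + C₅ * Real.exp (2*z))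
          + (F z - 1) * (C₆ * (1 * Real.exp (1*z)) + C₅ * (2 * Real.exp (2*z))))
        - (deriv f1 z * (C₆ * Real.exp (1*z) + 1/2 * C₅ * Real.exp (2*z))
          + f1 z * (C₆ * (1 * Real.exp (1*z)) + 1/2 * C₅ * (2 * Real.exp (2*z))))) z :=
      (((hFd z hz).sub_const 1).mul hd2).sub ((hf1d z hz).mul hd2')
    have hg2d : HasDerivAt (fun w => (g w)^2) (2 * g z * g1 z) z := by
      simpa using (hgd z hz).fun_pow 2
    have hdiv := hPd.div hg2d (pow_ne_zero 2 hgz0)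
    have hnum : ((f1 z * (C₆ * Real.exp (1*z) + C₅ * Real.exp (2*z))
          + (F z - 1) * (C₆ * (1 * Real.exp (1*z)) + C₅ * (2 * Real.exp (2*z))))
        - (deriv f1 z * (C₆ * Real.exp (1*z) + 1/2 * C₅ * Real.exp (2*z))
          + f1 z * (C₆ * (1 * Real.exp (1*z)) + 1/2 * C₅ * (2 * Real.exp (2*z)))))
          * (g z)^2 - P z * (2 * g z * g1 z) = 0 := by
      simp only [hP_def]
      linear_combination (g z * (F z - 1)) * id2 z hz
        - (g z * (C₆ * Real.exp (1*z) + 1/2 * C₅ * Real.exp (2*z))) * keyF z hz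
    have h0 : HasDerivAt aa (0 / ((g z)^2)^2) z := by
      rw [← hnum]; exact hdiv
    simpa using h0
  have hbbd : ∀ z ∈ I, HasDerivAt bb 0 z := by
    intro z hz
    have hgz0 : g z ≠ 0 := (hgpos z hz).ne'
    have hd1 : HasDerivAt (fun w => 1/2 * C₆ * Real.exp (-2*w) + C₅ * Real.exp (-1*w))
        (1/2 * C₆ * (-2 * Real.exp (-2*z)) + C₅ * (-1 * Real.exp (-1*z))) z :=
      ((hasDerivAt_exp_mul (-2) z).const_mul (1/2 * C₆)).add
        ((hasDerivAt_exp_mul (-1) z).const_mul C₅)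
    have hd1' : HasDerivAt (fun w => -(C₆ * Real.exp (-2*w)) - C₅ * Real.exp (-1*w))
        (-(C₆ * (-2 * Real.exp (-2*z))) - C₅ * (-1 * Real.exp (-1*z))) z :=
      (((hasDerivAt_exp_mul (-2) z).const_mul C₆).neg).sub
        ((hasDerivAt_exp_mul (-1) z).const_mul C₅)
    have hQd : HasDerivAt Q
        ((deriv f1 z * (1/2 * C₆ * Real.exp (-2*z) + C₅ * Real.exp (-1*z))
          + f1 z * (1/2 * C₆ * (-2 * Real.exp (-2*z)) + C₅ * (-1 * Real.exp (-1*z))))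
        - (f1 z * (-(C₆ * Real.exp (-2*z)) - C₅ * Real.exp (-1*z))
          + (F z - 1) * (-(C₆ * (-2 * Real.exp (-2*z))) - C₅ * (-1 * Real.exp (-1*z))))) z :=
      ((hf1d z hz).mul hd1).sub (((hFd z hz).sub_const 1).mul hd1')
    have hg2d : HasDerivAt (fun w => (g w)^2) (2 * g z * g1 z) z := by
      simpa using (hgd z hz).fun_pow 2
    have hdiv := hQd.div hg2d (pow_ne_zero 2 hgz0)
    have hnum : ((deriv f1 z * (1/2 * C₆ * Real.exp (-2*z) + C₅ * Real.exp (-1*z))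
          + f1 z * (1/2 * C₆ * (-2 * Real.exp (-2*z)) + C₅ * (-1 * Real.exp (-1*z))))
        - (f1 z * (-(C₆ * Real.exp (-2*z)) - C₅ * Real.exp (-1*z))
          + (F z - 1) * (-(C₆ * (-2 * Real.exp (-2*z))) - C₅ * (-1 * Real.exp (-1*z)))))
          * (g z)^2 - Q z * (2 * g z * g1 z) = 0 := by
      simp only [hQ_def]
      linear_combination (g z * (1/2 * C₆ * Real.exp (-2*z) + C₅ * Real.exp (-1*z))) * keyF z hz
        - (g z * (F z - 1)) * id1 z hz
    have h0 : HasDerivAt bb (0 / ((g z)^2)^2) z := by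
      rw [← hnum]; exact hdiv
    simpa using h0
  obtain ⟨a₀, ha0_def⟩ : ∃ c : ℝ, c = aa z₀ := ⟨_, rfl⟩
  obtain ⟨b₀, hb0_def⟩ : ∃ c : ℝ, c = bb z₀ := ⟨_, rfl⟩
  have hPz : ∀ z ∈ I, P z = a₀ * (g z)^2 := by
    intro z hz
    have h := (const_of_hasDerivAt_zero hconv haad hz hz₀).trans ha0_def.symm
    simp only [haa_def] at h
    rw [div_eq_iff (pow_ne_zero 2 (hgpos z hz).ne')] at h
    exact h
  have hQz : ∀ z ∈ I, Q z = b₀ * (g z)^2 := by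
    intro z hz
    have h := (const_of_hasDerivAt_zero hconv hbbd hz hz₀).trans hb0_def.symm
    simp only [hbb_def] at h
    rw [div_eq_iff (pow_ne_zero 2 (hgpos z hz).ne')] at h
    exact h
  have hFform : ∀ z ∈ I, F z = 1
      + 2/3 * a₀ * (1/2 * C₆ * Real.exp (-2*z) + C₅ * Real.exp (-1*z))
      + 2/3 * b₀ * (C₆ * Real.exp (1*z) + 1/2 * C₅ * Real.exp (2*z)) := by
    intro z hz
    have hP' := hPz z hz
    have hQ' := hQz z hz
    simp only [hP_def] at hP'
    simp only [hQ_def] at hQ'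
    have hW := idW z hz
    have hg2ne : (g z)^2 ≠ 0 := pow_ne_zero 2 (hgpos z hz).ne'
    have key3 : ((F z - 1) * (3/2)) * (g z)^2
        = (a₀ * (1/2 * C₆ * Real.exp (-2*z) + C₅ * Real.exp (-1*z))
          + b₀ * (C₆ * Real.exp (1*z) + 1/2 * C₅ * Real.exp (2*z))) * (g z)^2 := by
      linear_combination (-(F z - 1)) * hW
        + (1/2 * C₆ * Real.exp (-2*z) + C₅ * Real.exp (-1*z)) * hP'
        + (C₆ * Real.exp (1*z) + 1/2 * C₅ * Real.exp (2*z)) * hQ'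
    have key4 := mul_right_cancel₀ hg2ne key3
    linear_combination (2/3 : ℝ) * key4
  refine ⟨2/3 * a₀ * C₆, 2/3 * a₀ * C₅, 2/3 * b₀ * C₆, 2/3 * b₀ * C₅, C₅, C₆,
    by ring, by ring, fun z hz => ⟨?_, hCform z hz⟩⟩
  have hf := hFform z hz
  have e1 : Real.exp (1*z) = Real.exp z := by rw [one_mul]
  have em1 : Real.exp (-1*z) = Real.exp (-z) := by norm_num
  rw [e1, em1] at hf
  rw [hf]
  ring
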